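/- The complex 3-dimensional algebra A₃₀ (e₁e₁ = e₁, e₂e₃ = e₃, e₃e₂ = −e₃) degenerates to A₂₇ (e₁e₁ = e₂, e₁e₃ = e₃, e₃e₁ = −e₃): for each t ≠ 0, the basis E₁ᵗ = te₁+e₂−e₃, E₂ᵗ = −te₂+te₃, E₃ᵗ = t²e₃ of A₃₀ has structure constants that are polynomial in t and converge, as t → 0, to the structure constants of A₂₇; concretely E₁ᵗ·E₁ᵗ = E₂ᵗ + t·(linear combination expressible in the Eᵢᵗ with polynomial coefficients), E₁ᵗ·E₃ᵗ = E₃ᵗ, E₃ᵗ·E₁ᵗ = −E₃ᵗ, and all other products of the Eᵢᵗ are O(t) in the Eᵢᵗ-coordinates. -/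

import Mathlib

/-- The algebra A₃₀ : e₁e₁ = e₁, e₂e₃ = e₃, e₃e₂ = −e₃. -/
def mulA30 (x y : Fin 3 → ℂ) : Fin 3 → ℂ :=
  ![x 0 * y 0, 0, x 1 * y 2 - x 2 * y 1]

/-- Parametrized basis for the degeneration A₃₀ → A₂₇:
E₁ᵗ = te₁+e₂−e₃, E₂ᵗ = −te₂+te₃, E₃ᵗ = t²e₃. -/
theorem stmt_18 (t : ℂ) (ht : t ≠ 0) :
    ∀ E₁ E₂ E₃ : Fin 3 → ℂ,
      E₁ = ![t, 1, -1] → E₂ = ![0, -t, t] → E₃ = ![0, 0, t ^ 2] →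
      LinearIndependent ℂ ![E₁, E₂, E₃] ∧
      mulA30 E₁ E₁ = E₂ + t • E₁ ∧
      mulA30 E₁ E₂ = 0 ∧
      mulA30 E₁ E₃ = E₃ ∧
      mulA30 E₂ E₁ = 0 ∧
      mulA30 E₂ E₂ = 0 ∧
      mulA30 E₂ E₃ = -t • E₃ ∧
      mulA30 E₃ E₁ = -E₃ ∧
      mulA30 E₃ E₂ = t • E₃ ∧
      mulA30 E₃ E₃ = 0 := by
  intro E₁ E₂ E₃ h1 h2 h3
  subst h1 h2 h3
  refine ⟨?_, ?_, ?_, ?_, ?_, ?_, ?_, ?_, ?_, ?_⟩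
  · have : LinearIndependent ℂ
        (fun i ↦ (Matrix.of ![![t, 1, -1], ![0, -t, t], ![0, 0, t ^ 2]]) i) := by
      rw [show (fun i ↦ (Matrix.of ![![t, 1, -1], ![0, -t, t], ![0, 0, t ^ 2]]) i) =
          (Matrix.of ![![t, 1, -1], ![0, -t, t], ![0, 0, t ^ 2]]).row from rfl,
        Matrix.linearIndependent_rows_iff_isUnit, Matrix.isUnit_iff_isUnit_det]
      simp [Matrix.det_fin_three]
      exact fun h => ht h
    exact this
  all_goals
    funext i; fin_cases i <;> simp [mulA30] <;> ring
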